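/- arXiv:1511.00080 — 4 statements merged into one kernel-verified Lean document; each statement's English description precedes it below -/
import Mathlib

section
/- For v ≥ 4 and d ≥ 1, the generating function for descents over diamond permutations of type (v,d) avoiding both 231 and 312 is (1+x)^{d(v-2)-1}; in particular, the number of such permutations with exactly k descents is binomial(d(v-2)-1, k). -/
/-!
Common definitions.  Positions and values are 0-indexed throughout:
a "diamond permutation of type (v,d)" is a permutation of `Fin (v*d)`
whose `i`-th block of `v` consecutive positions (positions `i*v, …, i*v+v-1`)
has its minimum value in the first position and its maximum value in the
last position of the block.
-/

def IsDiamond (v d : ℕ) (π : Equiv.Perm (Fin (v * d))) : Prop :=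
  ∀ i, i < d → ∀ j, j < v →
    ∀ (h0 : i * v < v * d) (hj : i * v + j < v * d) (hl : i * v + (v - 1) < v * d),
      π ⟨i * v, h0⟩ ≤ π ⟨i * v + j, hj⟩ ∧ π ⟨i * v + j, hj⟩ ≤ π ⟨i * v + (v - 1), hl⟩

def Avoids123 {n : ℕ} (π : Equiv.Perm (Fin n)) : Prop :=
  ¬ ∃ i j k : Fin n, i < j ∧ j < k ∧ π i < π j ∧ π j < π k

def Avoids132 {n : ℕ} (π : Equiv.Perm (Fin n)) : Prop :=
  ¬ ∃ i j k : Fin n, i < j ∧ j < k ∧ π i < π k ∧ π k < π j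

def Avoids213 {n : ℕ} (π : Equiv.Perm (Fin n)) : Prop :=
  ¬ ∃ i j k : Fin n, i < j ∧ j < k ∧ π j < π i ∧ π i < π k

def Avoids231 {n : ℕ} (π : Equiv.Perm (Fin n)) : Prop :=
  ¬ ∃ i j k : Fin n, i < j ∧ j < k ∧ π k < π i ∧ π i < π j

def Avoids312 {n : ℕ} (π : Equiv.Perm (Fin n)) : Prop :=
  ¬ ∃ i j k : Fin n, i < j ∧ j < k ∧ π j < π k ∧ π k < π i

def Avoids321 {n : ℕ} (π : Equiv.Perm (Fin n)) : Prop :=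
  ¬ ∃ i j k : Fin n, i < j ∧ j < k ∧ π k < π j ∧ π j < π i

/-- `π` contains the pattern `ρ`: some subsequence of `π` is order-isomorphic to `ρ`. -/
def ContainsPat {m n : ℕ} (ρ : Equiv.Perm (Fin m)) (π : Equiv.Perm (Fin n)) : Prop :=
  ∃ f : Fin m → Fin n, StrictMono f ∧ ∀ a b, π (f a) < π (f b) ↔ ρ a < ρ b

def AvoidsPat {m n : ℕ} (ρ : Equiv.Perm (Fin m)) (π : Equiv.Perm (Fin n)) : Prop :=
  ¬ ContainsPat ρ π

/-- The reverse-complement of a permutation: `(rcPerm π) i = n - 1 - π (n - 1 - i)`. -/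
def rcPerm {n : ℕ} (π : Equiv.Perm (Fin n)) : Equiv.Perm (Fin n) :=
  (Fin.revPerm.trans π).trans Fin.revPerm

/-- The number of descents of `π`. -/
noncomputable def desNum {n : ℕ} (π : Equiv.Perm (Fin n)) : ℕ :=
  Nat.card {i : Fin n // ∃ h : i.1 + 1 < n, π ⟨i.1 + 1, h⟩ < π i}


namespace DiamondAux

variable {n : ℕ}

def Loc (π : Equiv.Perm (Fin n)) : Prop :=
  ∀ t : ℕ, ∀ h : t + 1 < n,
    ((π ⟨t, Nat.lt_of_succ_lt h⟩ : Fin n) : ℕ) ≤ ((π ⟨t + 1, h⟩ : Fin n) : ℕ) + 1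

lemma locX {π : Equiv.Perm (Fin n)} (hπ : Loc π) (p q x : Fin n)
    (hpq : p < q) (h1 : π q < π x) (h2 : π x < π p) (hx : x < p ∨ q < x) : False := by
  classical
  have hex : ∃ m, m < n ∧ ∀ hm : m < n, p.1 < m ∧ π ⟨m, hm⟩ < π x :=
    ⟨q.1, q.2, fun hm => ⟨hpq, by simpa using h1⟩⟩
  set t := Nat.find hex with htdef
  obtain ⟨htn, hspec⟩ := Nat.find_spec hex
  obtain ⟨hpt, hlt⟩ := hspec htn
  have h1t : 1 ≤ t := by omega
  have htq : t ≤ q.1 := Nat.find_le ⟨q.2, fun hm => ⟨hpq, by simpa using h1⟩⟩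
  have ht1n : t - 1 < n := by omega
  have hne : (⟨t - 1, ht1n⟩ : Fin n) ≠ x := by
    apply Fin.ne_of_val_ne
    simp only [Fin.val_mk]
    rcases hx with hx | hx
    · have hx' : x.1 < p.1 := hx
      omega
    · have hx' : q.1 < x.1 := hx
      omega
  have key : π x < π ⟨t - 1, ht1n⟩ := by
    rcases eq_or_lt_of_le (show p.1 ≤ t - 1 by omega) with heq | hlt'
    · have : (⟨t - 1, ht1n⟩ : Fin n) = p := Fin.ext heq.symm
      rw [this]; exact h2
    · have hnot : ¬ (π ⟨t - 1, ht1n⟩ < π x) := by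
        intro hc
        exact (Nat.find_min hex (show t - 1 < t by omega)) ⟨ht1n, fun hm => ⟨hlt', hc⟩⟩
      have hle : π x ≤ π ⟨t - 1, ht1n⟩ := le_of_not_gt hnot
      refine lt_of_le_of_ne hle (fun hc => hne ?_)
      exact (π.injective hc.symm)
  have hloc := hπ (t - 1) (by omega)
  have heq : (⟨t - 1 + 1, by omega⟩ : Fin n) = ⟨t, htn⟩ := Fin.ext (by simp; omega)
  rw [heq] at hloc
  have v1 : ((π ⟨t, htn⟩ : Fin n) : ℕ) < ((π x : Fin n) : ℕ) := hlt
  have v2 : ((π x : Fin n) : ℕ) < ((π ⟨t - 1, ht1n⟩ : Fin n) : ℕ) := key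
  omega

def Avoids231' {n : ℕ} (π : Equiv.Perm (Fin n)) : Prop :=
  ¬ ∃ i j k : Fin n, i < j ∧ j < k ∧ π k < π i ∧ π i < π j

def Avoids312' {n : ℕ} (π : Equiv.Perm (Fin n)) : Prop :=
  ¬ ∃ i j k : Fin n, i < j ∧ j < k ∧ π j < π k ∧ π k < π i

lemma avoids231_of_loc {π : Equiv.Perm (Fin n)} (hl : Loc π) : Avoids231' π := by
  rintro ⟨i, j, k, hij, hjk, h1, h2⟩
  exact locX hl j k i hjk h1 h2 (Or.inl hij)

lemma avoids312_of_loc {π : Equiv.Perm (Fin n)} (hl : Loc π) : Avoids312' π := by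
  rintro ⟨i, j, k, hij, hjk, h1, h2⟩
  exact locX hl i j k hij h1 h2 (Or.inr hjk)

lemma loc_of_avoids {π : Equiv.Perm (Fin n)} (h231 : Avoids231' π) (h312 : Avoids312' π) :
    Loc π := by
  intro t h
  by_contra hlt
  push_neg at hlt
  set T : Fin n := ⟨t, Nat.lt_of_succ_lt h⟩ with hT
  set T1 : Fin n := ⟨t + 1, h⟩ with hT1
  have hcn : (π T1 : ℕ) + 1 < n := by
    have : (π T : ℕ) < n := (π T).2
    omega
  set c : Fin n := ⟨(π T1 : ℕ) + 1, hcn⟩ with hc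
  set x : Fin n := π.symm c with hxdef
  have hπx : π x = c := π.apply_symm_apply c
  have hcT : c < π T := by
    rw [Fin.lt_def]; simp only [hc, Fin.val_mk]; omega
  have hT1c : π T1 < c := by
    rw [Fin.lt_def]; simp only [hc, Fin.val_mk]; omega
  have hxT : x ≠ T := by
    intro he; rw [he] at hπx; rw [hπx] at hcT; exact lt_irrefl _ hcT
  have hxT1 : x ≠ T1 := by
    intro he; rw [he] at hπx; rw [hπx] at hT1c; exact lt_irrefl _ hT1c
  have hTT1 : T < T1 := by rw [Fin.lt_def]; simp [hT, hT1]
  rcases lt_trichotomy x.1 t with hx | hx | hx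
  · exact h231 ⟨x, T, T1, by rw [Fin.lt_def]; exact hx, hTT1,
      by rw [hπx]; exact hT1c, by rw [hπx]; exact hcT⟩
  · exact hxT (Fin.ext hx)
  · have hx1 : t + 1 < x.1 := by
      rcases Nat.lt_or_ge (t+1) x.1 with h' | h'
      · exact h'
      · exfalso; exact hxT1 (Fin.ext (show x.1 = t + 1 by omega))
    exact h312 ⟨T, T1, x, hTT1, by rw [Fin.lt_def]; exact hx1,
      by rw [hπx]; exact hT1c, by rw [hπx]; exact hcT⟩

lemma loc_sep {π : Equiv.Perm (Fin n)} (hl : Loc π) {g : ℕ} (hg : g + 1 < n)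
    (hasc : π ⟨g, Nat.lt_of_succ_lt hg⟩ < π ⟨g + 1, hg⟩)
    (q r : Fin n) (hq : q.1 ≤ g) (hr : g + 1 ≤ r.1) : π q < π r := by
  set G : Fin n := ⟨g, Nat.lt_of_succ_lt hg⟩ with hG
  set G1 : Fin n := ⟨g + 1, hg⟩ with hG1
  by_contra hcon
  push_neg at hcon
  have hqr : q < r := by rw [Fin.lt_def]; omega
  have hne : π r ≠ π q := fun he => by
    have := π.injective he
    rw [this] at hqr; exact lt_irrefl _ hqr
  have hrq : π r < π q := lt_of_le_of_ne hcon hne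
  rcases lt_trichotomy (π r) (π G) with h1 | h1 | h1
  · -- π r < π G : use locX with p := G1, q := r, x := G
    have hG1r : G1 < r := by
      rw [Fin.lt_def]
      rcases Nat.lt_or_ge (g+1) r.1 with h' | h'
      · exact h'
      · exfalso
        have : r = G1 := Fin.ext (show r.1 = g + 1 by omega)
        rw [this] at h1
        exact absurd hasc (asymm h1)
    exact locX hl G1 r G hG1r h1 hasc (Or.inl (by rw [Fin.lt_def]; exact Nat.lt_succ_self g))
  · have hrG : r = G := π.injective h1
    have : r.1 = g := by rw [hrG]
    omega
  · -- π G < π r, so π q > π r > π G, hence q < G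
    have hqG : q < G := by
      rw [Fin.lt_def]
      rcases Nat.lt_or_ge q.1 g with h' | h'
      · exact h'
      · exfalso
        have : q = G := Fin.ext (show q.1 = g by omega)
        rw [this] at hrq
        exact absurd hrq (asymm h1)
    exact locX hl q G r hqG h1 hrq (Or.inr (by rw [Fin.lt_def]; show g < r.1; omega))
lemma loc_prefix {π : Equiv.Perm (Fin n)} (hl : Loc π) {g : ℕ} (hg : g + 1 < n)
    (hasc : π ⟨g, Nat.lt_of_succ_lt hg⟩ < π ⟨g + 1, hg⟩) :
    ∀ q : Fin n, q.1 ≤ g → (π q).1 ≤ g := by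
  intro q hq
  by_contra hcon
  push_neg at hcon
  classical
  set S : Finset (Fin n) :=
    insert (π q) ((Finset.univ.filter (fun r : Fin n => g + 1 ≤ r.1)).image π) with hS
  have hsub : S ⊆ Finset.univ.filter (fun y : Fin n => g + 1 ≤ y.1) := by
    intro y hy
    rw [hS, Finset.mem_insert] at hy
    rcases hy with hy | hy
    · subst hy; simp; omega
    · rw [Finset.mem_image] at hy
      obtain ⟨r, hr, hry⟩ := hy
      rw [Finset.mem_filter] at hr
      have := loc_sep hl hg hasc q r hq hr.2
      rw [hry] at this
      simp
      rw [Fin.lt_def] at this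
      omega
  have hnotmem : π q ∉ (Finset.univ.filter (fun r : Fin n => g + 1 ≤ r.1)).image π := by
    rw [Finset.mem_image]
    rintro ⟨r, hr, hry⟩
    rw [Finset.mem_filter] at hr
    have := π.injective hry
    rw [this] at hr
    omega
  have hcard1 : S.card = ((Finset.univ.filter (fun r : Fin n => g + 1 ≤ r.1)).image π).card + 1 :=
    Finset.card_insert_of_notMem hnotmem
  have hcard2 : ((Finset.univ.filter (fun r : Fin n => g + 1 ≤ r.1)).image π).card
      = (Finset.univ.filter (fun r : Fin n => g + 1 ≤ r.1)).card :=
    Finset.card_image_of_injective _ π.injective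
  have hfe : Finset.univ.filter (fun r : Fin n => g + 1 ≤ r.1) = Finset.Ici (⟨g+1, hg⟩ : Fin n) := by
    ext r
    simp [Finset.mem_Ici, Fin.le_def]
  have hcard3 : (Finset.univ.filter (fun r : Fin n => g + 1 ≤ r.1)).card = n - (g+1) := by
    rw [hfe, Fin.card_Ici]
  have hle := Finset.card_le_card hsub
  rw [hcard1, hcard2, hcard3] at hle
  omega

lemma loc_suffix {π : Equiv.Perm (Fin n)} (hl : Loc π) {g : ℕ} (hg : g + 1 < n)
    (hasc : π ⟨g, Nat.lt_of_succ_lt hg⟩ < π ⟨g + 1, hg⟩) :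
    ∀ r : Fin n, g + 1 ≤ r.1 → g + 1 ≤ (π r).1 := by
  intro r hr
  by_contra hcon
  push_neg at hcon
  classical
  set S : Finset (Fin n) :=
    insert (π r) ((Finset.univ.filter (fun q : Fin n => q.1 ≤ g)).image π) with hS
  have hsub : S ⊆ Finset.univ.filter (fun y : Fin n => y.1 ≤ g) := by
    intro y hy
    rw [hS, Finset.mem_insert] at hy
    rcases hy with hy | hy
    · subst hy; simp; omega
    · rw [Finset.mem_image] at hy
      obtain ⟨q, hq, hqy⟩ := hy
      rw [Finset.mem_filter] at hq
      have := loc_sep hl hg hasc q r hq.2 hr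
      rw [hqy] at this
      simp
      rw [Fin.lt_def] at this
      omega
  have hnotmem : π r ∉ (Finset.univ.filter (fun q : Fin n => q.1 ≤ g)).image π := by
    rw [Finset.mem_image]
    rintro ⟨q, hq, hqy⟩
    rw [Finset.mem_filter] at hq
    have := π.injective hqy
    rw [this] at hq
    omega
  have hcard1 : S.card = ((Finset.univ.filter (fun q : Fin n => q.1 ≤ g)).image π).card + 1 :=
    Finset.card_insert_of_notMem hnotmem
  have hcard2 : ((Finset.univ.filter (fun q : Fin n => q.1 ≤ g)).image π).card
      = (Finset.univ.filter (fun q : Fin n => q.1 ≤ g)).card :=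
    Finset.card_image_of_injective _ π.injective
  have hfe : Finset.univ.filter (fun q : Fin n => q.1 ≤ g)
      = Finset.Iic (⟨g, Nat.lt_of_succ_lt hg⟩ : Fin n) := by
    ext q
    simp [Finset.mem_Iic, Fin.le_def]
  have hcard3 : (Finset.univ.filter (fun q : Fin n => q.1 ≤ g)).card = g + 1 := by
    rw [hfe, Fin.card_Iic]
  have hle := Finset.card_le_card hsub
  rw [hcard1, hcard2, hcard3] at hle
  omega
/-! ### run-start and run-end functions built from a descent vector -/

def Afun (s' : ℕ → Bool) (p : ℕ) : ℕ :=
  Nat.findGreatest (fun m => 0 < m ∧ s' (m - 1) = false) p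

def Bfun (n : ℕ) (s' : ℕ → Bool) (p : ℕ) : ℕ :=
  Nat.find (p := fun m => p ≤ m ∧ (n - 1 ≤ m ∨ s' m = false))
    ⟨max p (n - 1), le_max_left _ _, Or.inl (le_max_right _ _)⟩

variable {s' : ℕ → Bool}

lemma Afun_le (p : ℕ) : Afun s' p ≤ p := Nat.findGreatest_le p

lemma le_Bfun (p : ℕ) : p ≤ Bfun n s' p := (Nat.find_spec (p := fun m => p ≤ m ∧ (n - 1 ≤ m ∨ s' m = false)) _).1

lemma Bfun_le {p : ℕ} (hp : p ≤ n - 1) : Bfun n s' p ≤ n - 1 :=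
  Nat.find_le ⟨hp, Or.inl le_rfl⟩

lemma Bfun_false {p : ℕ} (hp : p ≤ n - 1) (hs : s' (n - 1) = false) :
    s' (Bfun n s' p) = false := by
  rcases (Nat.find_spec (p := fun m => p ≤ m ∧ (n - 1 ≤ m ∨ s' m = false)) _).2 with h | h
  · have := Bfun_le (s' := s') hp
    have : Bfun n s' p = n - 1 := le_antisymm this h
    rw [this]; exact hs
  · exact h

lemma Bfun_min {p m : ℕ} (hpm : p ≤ m) (hm : m < Bfun n s' p) : s' m = true := by
  have := Nat.find_min (p := fun m => p ≤ m ∧ (n - 1 ≤ m ∨ s' m = false))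
    ⟨max p (n - 1), le_max_left _ _, Or.inl (le_max_right _ _)⟩ hm
  by_contra hc
  have hfalse : s' m = false := by
    cases h : s' m
    · rfl
    · exact absurd h hc
  exact this ⟨hpm, Or.inr hfalse⟩

lemma Afun_false {p : ℕ} (h : 0 < Afun s' p) : s' (Afun s' p - 1) = false := by
  have := Nat.findGreatest_of_ne_zero (P := fun m => 0 < m ∧ s' (m - 1) = false)
    (n := p) rfl (Nat.pos_iff_ne_zero.mp h)
  exact this.2

lemma Afun_min {p m : ℕ} (ham : Afun s' p ≤ m) (hmp : m < p) : s' m = true := by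
  have h1 : Afun s' p < m + 1 := by omega
  have h2 : m + 1 ≤ p := by omega
  have h3 := Nat.findGreatest_is_greatest (P := fun m => 0 < m ∧ s' (m - 1) = false) h1 h2
  by_contra hc
  have hfalse : s' m = false := by
    cases h : s' m
    · rfl
    · exact absurd h hc
  exact h3 ⟨Nat.succ_pos m, by simpa using hfalse⟩

lemma run_true {p m : ℕ} (h1 : Afun s' p ≤ m) (h2 : m < Bfun n s' p) : s' m = true := by
  rcases Nat.lt_or_ge m p with h | h
  · exact Afun_min h1 h
  · exact Bfun_min h h2

lemma same_run {p q : ℕ} (hpq : p ≤ q) (hq : q ≤ Bfun n s' p) :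
    Afun s' q = Afun s' p ∧ Bfun n s' q = Bfun n s' p := by
  have hap : Afun s' p ≤ p := Afun_le p
  have hbB : Bfun n s' q ≤ Bfun n s' p := by
    apply Nat.find_le
    refine ⟨hq, ?_⟩
    exact (Nat.find_spec (p := fun m => p ≤ m ∧ (n - 1 ≤ m ∨ s' m = false)) _).2
  have hBb : Bfun n s' p ≤ Bfun n s' q := by
    by_contra hc
    push_neg at hc
    have h1 : s' (Bfun n s' q) = true := by
      refine run_true (p := p) ?_ hc
      calc Afun s' p ≤ p := hap
        _ ≤ q := hpq
        _ ≤ Bfun n s' q := le_Bfun q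
    have h2 : s' (Bfun n s' q) = false ∨ n - 1 ≤ Bfun n s' q := by
      rcases (Nat.find_spec (p := fun m => q ≤ m ∧ (n - 1 ≤ m ∨ s' m = false)) _).2 with h | h
      · exact Or.inr h
      · exact Or.inl h
    rcases h2 with h2 | h2
    · rw [h1] at h2; exact Bool.noConfusion h2
    · -- Bfun n s' q ≥ n-1 but Bfun n s' q < Bfun n s' p ≤ ?  need p ≤ n-1?  derive from hc
      have : Bfun n s' p ≤ max p (n-1) := Nat.find_le ⟨le_max_left _ _, Or.inl (le_max_right _ _)⟩
      have hpn : p ≤ Bfun n s' q := le_trans (le_trans hpq (le_Bfun q)) (le_refl _)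
      omega
  have hB : Bfun n s' q = Bfun n s' p := le_antisymm hbB hBb
  refine ⟨?_, hB⟩
  have hAq : Afun s' p ≤ Afun s' q := by
    rcases Nat.eq_zero_or_pos (Afun s' p) with h | h
    · omega
    · exact Nat.le_findGreatest (le_trans hap hpq) ⟨h, Afun_false h⟩
  have hAq' : Afun s' q ≤ Afun s' p := by
    by_contra hc
    push_neg at hc
    have hq0 : 0 < Afun s' q := by omega
    have hf : s' (Afun s' q - 1) = false := Afun_false hq0
    have haq : Afun s' q ≤ q := Afun_le q
    have ht : s' (Afun s' q - 1) = true :=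
      run_true (n := n) (p := p) (by omega) (by omega)
    rw [ht] at hf; exact Bool.noConfusion hf
  omega

lemma same_run' {p q : ℕ} (hp : p ≤ n - 1) (hs : s' (n - 1) = false)
    (haq : Afun s' p ≤ q) (hqp : q ≤ p) :
    Afun s' q = Afun s' p ∧ Bfun n s' q = Bfun n s' p := by
  have hqB : p ≤ Bfun n s' q := by
    by_contra hc
    push_neg at hc
    have hq' : q ≤ n - 1 := le_trans hqp hp
    have hf : s' (Bfun n s' q) = false := Bfun_false hq' hs
    have ht : s' (Bfun n s' q) = true :=
      Afun_min (le_trans haq (le_Bfun q)) hc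
    rw [ht] at hf; exact Bool.noConfusion hf
  obtain ⟨h1, h2⟩ := same_run (s' := s') hqp hqB
  exact ⟨h1.symm, h2.symm⟩
/-! ### the permutation built from a descent vector -/

lemma Bfun_spec2 (n : ℕ) (s' : ℕ → Bool) (p : ℕ) :
    n - 1 ≤ Bfun n s' p ∨ s' (Bfun n s' p) = false :=
  (Nat.find_spec (p := fun m => p ≤ m ∧ (n - 1 ≤ m ∨ s' m = false)) _).2

def ff (n : ℕ) (s' : ℕ → Bool) : Fin n → Fin n := fun p =>
  ⟨Afun s' p.1 + (Bfun n s' p.1 - p.1), by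
    have h1 : Afun s' p.1 ≤ p.1 := Afun_le p.1
    have h2 : p.1 ≤ Bfun n s' p.1 := le_Bfun p.1
    have h3 : Bfun n s' p.1 ≤ n - 1 := Bfun_le (by omega)
    have := p.2
    omega⟩

lemma ff_val (p : Fin n) : (ff n s' p).1 = Afun s' p.1 + (Bfun n s' p.1 - p.1) := rfl

lemma ff_inj (hs : s' (n - 1) = false) : Function.Injective (ff n s') := by
  have key : ∀ p p' : Fin n, p.1 ≤ p'.1 → ff n s' p = ff n s' p' → p = p' := by
    intro p p' hle heq
    have hv : (ff n s' p).1 = (ff n s' p').1 := by rw [heq]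
    rw [ff_val, ff_val] at hv
    have hap : Afun s' p.1 ≤ p.1 := Afun_le p.1
    have hbp : p.1 ≤ Bfun n s' p.1 := le_Bfun p.1
    have hap' : Afun s' p'.1 ≤ p'.1 := Afun_le p'.1
    have hbp' : p'.1 ≤ Bfun n s' p'.1 := le_Bfun p'.1
    rcases le_or_gt p'.1 (Bfun n s' p.1) with hc | hc
    · obtain ⟨hA, hB⟩ := same_run (s' := s') hle hc
      rw [hA, hB] at hv
      exact Fin.ext (by omega)
    · exfalso
      have hge : Bfun n s' p.1 + 1 ≤ Afun s' p'.1 := by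
        apply Nat.le_findGreatest (by omega)
        refine ⟨Nat.succ_pos _, ?_⟩
        simpa using Bfun_false (s' := s') (by have := p.2; omega) hs
      omega
  intro p p' heq
  rcases le_or_gt p.1 p'.1 with h | h
  · exact key p p' h heq
  · exact (key p' p (le_of_lt h) heq.symm).symm

lemma ff_desc {g : ℕ} (hg : g + 1 < n) (hsg : s' g = true) :
    (ff n s' ⟨g + 1, hg⟩).1 + 1 = (ff n s' ⟨g, Nat.lt_of_succ_lt hg⟩).1 := by
  have hBg : g < Bfun n s' g := by
    rcases Nat.lt_or_ge g (Bfun n s' g) with h | h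
    · exact h
    · exfalso
      have hBeq : Bfun n s' g = g := le_antisymm h (le_Bfun g)
      rcases Bfun_spec2 n s' g with h2 | h2
      · omega
      · rw [hBeq, hsg] at h2; exact Bool.noConfusion h2
  obtain ⟨hA, hB⟩ := same_run (n := n) (s' := s') (p := g) (q := g + 1) (by omega) (by omega)
  rw [ff_val, ff_val]
  simp only [Fin.val_mk]
  rw [hA, hB]
  have hag : Afun s' g ≤ g := Afun_le g
  omega

lemma ff_asc {g : ℕ} (hg : g + 1 < n) (hsg : s' g = false) :
    (ff n s' ⟨g, Nat.lt_of_succ_lt hg⟩).1 < (ff n s' ⟨g + 1, hg⟩).1 := by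
  have hBg : Bfun n s' g = g := le_antisymm (Nat.find_le ⟨le_rfl, Or.inr hsg⟩) (le_Bfun g)
  have hAg1 : Afun s' (g + 1) = g + 1 := by
    refine le_antisymm (Afun_le (g + 1)) ?_
    exact Nat.le_findGreatest le_rfl ⟨Nat.succ_pos g, by simpa using hsg⟩
  rw [ff_val, ff_val]
  simp only [Fin.val_mk]
  rw [hBg, hAg1]
  have h1 : Afun s' g ≤ g := Afun_le g
  have h2 : g + 1 ≤ Bfun n s' (g + 1) := le_Bfun (g + 1)
  omega

lemma ff_loc (hs : s' (n - 1) = false) :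
    Loc (Equiv.ofBijective (ff n s') (Finite.injective_iff_bijective.mp (ff_inj hs))) := by
  intro t h
  simp only [Equiv.ofBijective_apply]
  cases hst : s' t
  · have := ff_asc (s' := s') h hst
    omega
  · have := ff_desc (s' := s') h hst
    omega

lemma ff_step_iff (hs : s' (n - 1) = false) {g : ℕ} (hg : g + 1 < n) :
    (s' g = true ↔ (Equiv.ofBijective (ff n s') (Finite.injective_iff_bijective.mp (ff_inj hs)))
        ⟨g + 1, hg⟩ < (Equiv.ofBijective (ff n s')
          (Finite.injective_iff_bijective.mp (ff_inj hs))) ⟨g, Nat.lt_of_succ_lt hg⟩) := by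
  simp only [Equiv.ofBijective_apply, Fin.lt_def]
  constructor
  · intro hst
    have := ff_desc (s' := s') hg hst
    omega
  · intro hlt
    cases hst : s' g
    · exfalso
      have := ff_asc (s' := s') hg hst
      omega
    · rfl

/-! ### determination: a `Loc` permutation is recovered from its descent vector -/

lemma loc_eq_ff {π : Equiv.Perm (Fin n)} (hl : Loc π) (hs : s' (n - 1) = false)
    (hcomp : ∀ g (hg : g + 1 < n),
      s' g = true ↔ π ⟨g + 1, hg⟩ < π ⟨g, Nat.lt_of_succ_lt hg⟩) :
    ∀ p : Fin n, π p = ff n s' p := by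
  intro p
  have hn0 : 0 < n := p.pos
  set Ap := Afun s' p.1 with hApdef
  set Bp := Bfun n s' p.1 with hBpdef
  have hap : Ap ≤ p.1 := Afun_le p.1
  have hbp : p.1 ≤ Bp := le_Bfun p.1
  have hBle : Bp ≤ n - 1 := Bfun_le (by have := p.2; omega)
  -- within the run, descents drop by exactly one
  have hdrop : ∀ m, Ap ≤ m → m < Bp → ∀ (hm1 : m + 1 < n),
      (π ⟨m, Nat.lt_of_succ_lt hm1⟩ : ℕ) = (π ⟨m + 1, hm1⟩ : ℕ) + 1 := by
    intro m h1 h2 hm1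
    have ht : s' m = true := run_true (n := n) (p := p.1) h1 h2
    have hd := (hcomp m hm1).mp ht
    rw [Fin.lt_def] at hd
    have := hl m hm1
    omega
  have hchain : ∀ q, Ap ≤ q → ∀ (hq : q ≤ Bp),
      (π ⟨Ap, by omega⟩ : ℕ) = (π ⟨q, by omega⟩ : ℕ) + (q - Ap) := by
    intro q hq
    induction q, hq using Nat.le_induction with
    | base => intro _; simp
    | succ m hm ih =>
      intro hq
      have hm1 : m + 1 < n := by omega
      have h1 := ih (by omega)
      have h2 := hdrop m hm (by omega) hm1
      omega
  have hBA := hchain Bp (by omega) (le_refl Bp)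
  -- upper bound : value at Ap is at most Bp
  have hupper : (π ⟨Ap, by omega⟩ : ℕ) ≤ Bp := by
    rcases Nat.lt_or_ge Bp (n - 1) with h | h
    · have hg : Bp + 1 < n := by omega
      have hsf : s' Bp = false := Bfun_false (by have := p.2; omega) hs
      have hasc : π ⟨Bp, Nat.lt_of_succ_lt hg⟩ < π ⟨Bp + 1, hg⟩ := by
        have hnd := (hcomp Bp hg).not.mp (by simp [hsf])
        have hne : π ⟨Bp, Nat.lt_of_succ_lt hg⟩ ≠ π ⟨Bp + 1, hg⟩ := by
          intro he
          have h' := π.injective he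
          have hv : Bp = Bp + 1 := congrArg Fin.val h'
          omega
        rcases lt_or_gt_of_ne hne with h' | h'
        · exact h'
        · exact absurd h' hnd
      exact loc_prefix hl hg hasc ⟨Ap, by omega⟩ (show Ap ≤ Bp by omega)
    · have := (π ⟨Ap, by omega⟩).2
      omega
  -- lower bound : value at Bp is at least Ap
  have hlower : Ap ≤ (π ⟨Bp, by omega⟩ : ℕ) := by
    rcases Nat.eq_zero_or_pos Ap with h | h
    · omega
    · have hg : (Ap - 1) + 1 < n := by omega
      have hsf : s' (Ap - 1) = false := Afun_false h
      have hasc : π ⟨Ap - 1, Nat.lt_of_succ_lt hg⟩ < π ⟨(Ap - 1) + 1, hg⟩ := by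
        have hnd := (hcomp (Ap - 1) hg).not.mp (by simp [hsf])
        have hne : π ⟨Ap - 1, Nat.lt_of_succ_lt hg⟩ ≠ π ⟨(Ap - 1) + 1, hg⟩ := by
          intro he
          have h' := π.injective he
          have hv : Ap - 1 = (Ap - 1) + 1 := congrArg Fin.val h'
          omega
        rcases lt_or_gt_of_ne hne with h' | h'
        · exact h'
        · exact absurd h' hnd
      have hsuf := loc_suffix hl hg hasc ⟨Bp, by omega⟩ (show Ap - 1 + 1 ≤ Bp by omega)
      exact le_trans (by omega : Ap ≤ Ap - 1 + 1) hsuf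
  have hπA : (π ⟨Ap, by omega⟩ : ℕ) = Bp := by omega
  have hπp : (π ⟨p.1, p.2⟩ : ℕ) = Ap + (Bp - p.1) := by
    have := hchain p.1 hap hbp
    omega
  apply Fin.ext
  rw [ff_val]
  exact hπp
/-! ### descent vector of a permutation; extension to ℕ -/

def sOf (n : ℕ) (π : Equiv.Perm (Fin n)) : Fin (n - 1) → Bool := fun g =>
  decide (π ⟨g.1 + 1, by omega⟩ < π ⟨g.1, by omega⟩)

def extend (n : ℕ) (s : Fin (n - 1) → Bool) : ℕ → Bool := fun m =>
  if h : m < n - 1 then s ⟨m, h⟩ else false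

lemma extend_last (n : ℕ) (s : Fin (n - 1) → Bool) : extend n s (n - 1) = false :=
  dif_neg (lt_irrefl _)

lemma extend_lt {n : ℕ} (s : Fin (n - 1) → Bool) (g : Fin (n - 1)) :
    extend n s g.1 = s g := by
  unfold extend
  rw [dif_pos g.2]

lemma desNum'_eq {n : ℕ} (π : Equiv.Perm (Fin n)) :
    Nat.card {i : Fin n // ∃ h : i.1 + 1 < n, π ⟨i.1 + 1, h⟩ < π i}
      = (Finset.univ.filter (fun g : Fin (n - 1) => sOf n π g = true)).card := by
  classical
  have e : {i : Fin n // ∃ h : i.1 + 1 < n, π ⟨i.1 + 1, h⟩ < π i} ≃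
      {g : Fin (n - 1) // sOf n π g = true} :=
    { toFun := fun x => ⟨⟨x.1.1, by obtain ⟨h, _⟩ := x.2; omega⟩, by
        obtain ⟨h, hlt⟩ := x.2
        simp only [sOf, decide_eq_true_eq]
        exact hlt⟩
      invFun := fun y => ⟨⟨y.1.1, by have := y.1.2; omega⟩, ⟨show y.1.1 + 1 < n by have := y.1.2; omega, by
        have h2 := y.2
        simp only [sOf, decide_eq_true_eq] at h2
        exact h2⟩⟩
      left_inv := fun x => Subtype.ext (Fin.ext rfl)
      right_inv := fun y => Subtype.ext (Fin.ext rfl) }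
  rw [Nat.card_congr e, Nat.card_eq_fintype_card, Fintype.card_subtype]

lemma sOf_ofBijective (n : ℕ) (s : Fin (n - 1) → Bool) :
    sOf n (Equiv.ofBijective (ff n (extend n s))
      (Finite.injective_iff_bijective.mp (ff_inj (extend_last n s)))) = s := by
  funext g
  have hgb := g.2
  have hg : g.1 + 1 < n := by omega
  have hext := extend_lt s g
  simp only [sOf]
  cases hsg : s g
  · apply decide_eq_false
    intro hlt
    have h1 := (ff_step_iff (extend_last n s) hg).mpr hlt
    rw [hext, hsg] at h1
    exact Bool.noConfusion h1
  · apply decide_eq_true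
    exact (ff_step_iff (extend_last n s) hg).mp (by rw [hext, hsg])

/-! ### diamond condition as forced ascents -/

def FpP (v g : ℕ) : Prop := g % v = 0 ∨ g % v = v - 2

instance (v : ℕ) : DecidablePred (FpP v) := fun g => by unfold FpP; infer_instance

def IsDiamond' (v d : ℕ) (π : Equiv.Perm (Fin (v * d))) : Prop :=
  ∀ i, i < d → ∀ j, j < v →
    ∀ (h0 : i * v < v * d) (hj : i * v + j < v * d) (hl : i * v + (v - 1) < v * d),
      π ⟨i * v, h0⟩ ≤ π ⟨i * v + j, hj⟩ ∧ π ⟨i * v + j, hj⟩ ≤ π ⟨i * v + (v - 1), hl⟩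

lemma forced_of_diamond {v d : ℕ} (hv : 4 ≤ v) {π : Equiv.Perm (Fin (v * d))}
    (hdia : IsDiamond' v d π) {g : ℕ} (hg : g < v * d - 1) (hFp : FpP v g) :
    π ⟨g, by omega⟩ < π ⟨g + 1, by omega⟩ := by
  have hv0 : 0 < v := by omega
  have hdam := Nat.div_add_mod g v
  set i := g / v with hidef
  have hstrict : ∀ (h1 : g < v * d) (h2 : g + 1 < v * d),
      π ⟨g, h1⟩ ≤ π ⟨g + 1, h2⟩ → π ⟨g, h1⟩ < π ⟨g + 1, h2⟩ := by
    intro h1 h2 hle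
    refine lt_of_le_of_ne hle (fun he => ?_)
    have := π.injective he
    have : g = g + 1 := congrArg Fin.val this
    omega
  rcases hFp with h0 | h2
  · have hvi : v * i = g := by omega
    have hgiv : i * v = g := by rw [Nat.mul_comm]; exact hvi
    have hi : i < d := by
      have : v * i < v * d := by omega
      exact Nat.lt_of_mul_lt_mul_left this
    have hvs : v * (i + 1) ≤ v * d := Nat.mul_le_mul_left v hi
    have hmulsucc : v * (i + 1) = v * i + v := by ring
    have h0' : i * v < v * d := by omega
    have hj : i * v + 1 < v * d := by omega
    have hlast : i * v + (v - 1) < v * d := by omega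
    have hle := (hdia i hi 1 (by omega) h0' hj hlast).1
    have e1 : (⟨i * v, h0'⟩ : Fin (v * d)) = ⟨g, by omega⟩ := Fin.ext (show i * v = g by omega)
    have e2 : (⟨i * v + 1, hj⟩ : Fin (v * d)) = ⟨g + 1, by omega⟩ :=
      Fin.ext (show i * v + 1 = g + 1 by omega)
    rw [e1, e2] at hle
    exact hstrict _ _ hle
  · have hvi : v * i + (v - 2) = g := by omega
    have hgiv : i * v + (v - 2) = g := by rw [Nat.mul_comm]; exact hvi
    have hi : i < d := by
      have : v * i < v * d := by omega
      exact Nat.lt_of_mul_lt_mul_left this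
    have hvs : v * (i + 1) ≤ v * d := Nat.mul_le_mul_left v hi
    have hmulsucc : v * (i + 1) = v * i + v := by ring
    have h0' : i * v < v * d := by omega
    have hj : i * v + (v - 2) < v * d := by omega
    have hlast : i * v + (v - 1) < v * d := by omega
    have hle := (hdia i hi (v - 2) (by omega) h0' hj hlast).2
    have e1 : (⟨i * v + (v - 2), hj⟩ : Fin (v * d)) = ⟨g, by omega⟩ :=
      Fin.ext (show i * v + (v - 2) = g by omega)
    have e2 : (⟨i * v + (v - 1), hlast⟩ : Fin (v * d)) = ⟨g + 1, by omega⟩ :=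
      Fin.ext (show i * v + (v - 1) = g + 1 by omega)
    rw [e1, e2] at hle
    exact hstrict _ _ hle

lemma diamond_of_forced {v d : ℕ} (hv : 4 ≤ v) {π : Equiv.Perm (Fin (v * d))}
    (hl : Loc π)
    (hforced : ∀ g (hg : g < v * d - 1), FpP v g →
      π ⟨g, by omega⟩ < π ⟨g + 1, by omega⟩) :
    IsDiamond' v d π := by
  intro i hi j hj h0 hjlt hlast
  have hv0 : 0 < v := by omega
  have hvs : v * (i + 1) ≤ v * d := Nat.mul_le_mul_left v hi
  have hmulsucc : v * (i + 1) = v * i + v := by ring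
  have hcomm : i * v = v * i := Nat.mul_comm i v
  constructor
  · rcases Nat.eq_zero_or_pos j with hj0 | hj0
    · subst hj0
      exact le_of_eq (congrArg π (Fin.ext (show i * v = i * v + 0 by omega)))
    · have hg : i * v < v * d - 1 := by omega
      have hFp : FpP v (i * v) := Or.inl (Nat.mul_mod_left i v)
      have hasc := hforced (i * v) hg hFp
      have hg1 : i * v + 1 < v * d := by omega
      exact le_of_lt (loc_sep hl hg1 hasc ⟨i * v, h0⟩ ⟨i * v + j, hjlt⟩
        (show i * v ≤ i * v from le_refl _) (show i * v + 1 ≤ i * v + j by omega))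
  · rcases Nat.lt_or_ge j (v - 1) with hjlt' | hjge
    · have hg : i * v + (v - 2) < v * d - 1 := by omega
      have hFp : FpP v (i * v + (v - 2)) := by
        refine Or.inr ?_
        rw [Nat.add_comm, Nat.add_mul_mod_self_right]
        exact Nat.mod_eq_of_lt (by omega)
      have hasc := hforced (i * v + (v - 2)) hg hFp
      have hg1 : i * v + (v - 2) + 1 < v * d := by omega
      have hres := loc_sep hl hg1 hasc ⟨i * v + j, hjlt⟩ ⟨i * v + (v - 1), hlast⟩
        (show i * v + j ≤ i * v + (v - 2) by omega)
        (show i * v + (v - 2) + 1 ≤ i * v + (v - 1) by omega)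
      exact le_of_lt hres
    · have hje : j = v - 1 := by omega
      subst hje
      exact le_rfl
/-! ### counting the forced gaps -/

lemma forced_card (v d : ℕ) (hv : 4 ≤ v) (hd : 1 ≤ d) :
    (Finset.univ.filter (fun g : Fin (v * d - 1) => FpP v g.1)).card = 2 * d := by
  classical
  have hv0 : 0 < v := by omega
  have hbound : ∀ i : ℕ, i < d → i * v + (v - 1) < v * d := by
    intro i hi
    have hvs : v * (i + 1) ≤ v * d := Nat.mul_le_mul_left v hi
    have h1 : v * (i + 1) = v * i + v := by ring
    have hc : i * v = v * i := Nat.mul_comm _ _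
    omega
  set e : Fin d ⊕ Fin d → Fin (v * d - 1) :=
    Sum.elim (fun i => ⟨i.1 * v, by have := hbound i.1 i.2; omega⟩)
             (fun i => ⟨i.1 * v + (v - 2), by have := hbound i.1 i.2; omega⟩) with he
  have hmod2 : ∀ j : ℕ, (j * v + (v - 2)) % v = v - 2 := by
    intro j
    rw [Nat.add_comm, Nat.add_mul_mod_self_right]
    exact Nat.mod_eq_of_lt (by omega)
  have hinj : Function.Injective e := by
    intro x y hxy
    have hval := congrArg Fin.val hxy
    rcases x with i | i <;> rcases y with j | j <;>
      simp only [he, Sum.elim_inl, Sum.elim_inr, Fin.val_mk] at hval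
    · exact congrArg Sum.inl (Fin.ext (Nat.eq_of_mul_eq_mul_right hv0 hval))
    · exfalso
      have h1 : (i.1 * v) % v = 0 := Nat.mul_mod_left _ _
      have h2 := hmod2 j.1
      rw [hval, h2] at h1
      omega
    · exfalso
      have h1 : (j.1 * v) % v = 0 := Nat.mul_mod_left _ _
      have h2 := hmod2 i.1
      rw [← hval, h2] at h1
      omega
    · have : i.1 * v = j.1 * v := by omega
      exact congrArg Sum.inr (Fin.ext (Nat.eq_of_mul_eq_mul_right hv0 this))
  have hset : Finset.univ.filter (fun g : Fin (v * d - 1) => FpP v g.1)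
      = Finset.univ.image e := by
    ext g
    simp only [Finset.mem_filter, Finset.mem_image, Finset.mem_univ, true_and]
    constructor
    · intro hFp
      have hdam := Nat.div_add_mod g.1 v
      have hgb := g.2
      rcases hFp with h0 | h2
      · have hvi : v * (g.1 / v) = g.1 := by omega
        have hlt : g.1 / v < d := by
          have : v * (g.1 / v) < v * d := by omega
          exact Nat.lt_of_mul_lt_mul_left this
        exact ⟨Sum.inl ⟨g.1 / v, hlt⟩, Fin.ext (show g.1 / v * v = g.1 by
          rw [Nat.mul_comm]; exact hvi)⟩
      · have hvi : v * (g.1 / v) + (v - 2) = g.1 := by omega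
        have hlt : g.1 / v < d := by
          have : v * (g.1 / v) < v * d := by omega
          exact Nat.lt_of_mul_lt_mul_left this
        exact ⟨Sum.inr ⟨g.1 / v, hlt⟩, Fin.ext (show g.1 / v * v + (v - 2) = g.1 by
          rw [Nat.mul_comm]; exact hvi)⟩
    · rintro ⟨x, rfl⟩
      rcases x with i | i
      · exact Or.inl (Nat.mul_mod_left _ _)
      · exact Or.inr (hmod2 i.1)
  rw [hset, Finset.card_image_of_injective _ hinj, Finset.card_univ, Fintype.card_sum,
    Fintype.card_fin]
  omega
/-! ### main counting theorem -/

theorem main_count (v d : ℕ) (hv : 4 ≤ v) (hd : 1 ≤ d) (k : ℕ) :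
    Nat.card {π : Equiv.Perm (Fin (v * d)) //
        IsDiamond' v d π ∧ Avoids231' π ∧ Avoids312' π ∧
        Nat.card {i : Fin (v * d) // ∃ h : i.1 + 1 < v * d, π ⟨i.1 + 1, h⟩ < π i} = k}
      = (d * (v - 2) - 1).choose k := by
  classical
  have hn4 : 4 ≤ v * d := le_trans hv (Nat.le_mul_of_pos_right v hd)
  set Free : Finset (Fin (v * d - 1)) :=
    Finset.univ.filter (fun g : Fin (v * d - 1) => ¬ FpP v g.1) with hFree
  have E1 : {π : Equiv.Perm (Fin (v * d)) //
        IsDiamond' v d π ∧ Avoids231' π ∧ Avoids312' π ∧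
        Nat.card {i : Fin (v * d) // ∃ h : i.1 + 1 < v * d, π ⟨i.1 + 1, h⟩ < π i} = k} ≃
      {s : Fin (v * d - 1) → Bool //
        (∀ g : Fin (v * d - 1), FpP v g.1 → s g = false) ∧
        (Finset.univ.filter (fun g => s g = true)).card = k} :=
    { toFun := fun x => ⟨sOf (v * d) x.1, by
        constructor
        · intro g hFp
          simp only [sOf]
          apply decide_eq_false
          exact fun hlt => absurd hlt (asymm (forced_of_diamond hv x.2.1 g.2 hFp))
        · rw [← desNum'_eq]
          exact x.2.2.2.2⟩
      invFun := fun y => ⟨Equiv.ofBijective (ff (v * d) (extend (v * d) y.1))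
          (Finite.injective_iff_bijective.mp (ff_inj (extend_last (v * d) y.1))), by
        have hloc := ff_loc (extend_last (v * d) y.1)
        have hforced : ∀ g (hg : g < v * d - 1), FpP v g →
            (Equiv.ofBijective (ff (v * d) (extend (v * d) y.1))
              (Finite.injective_iff_bijective.mp (ff_inj (extend_last (v * d) y.1))))
              ⟨g, by omega⟩ <
            (Equiv.ofBijective (ff (v * d) (extend (v * d) y.1))
              (Finite.injective_iff_bijective.mp (ff_inj (extend_last (v * d) y.1))))
              ⟨g + 1, by omega⟩ := by
          intro g hg hFp
          have hfalse : extend (v * d) y.1 g = false := by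
            have h1 : extend (v * d) y.1 g = y.1 ⟨g, hg⟩ := dif_pos hg
            rw [h1]
            exact y.2.1 ⟨g, hg⟩ hFp
          have hasc := ff_asc (s' := extend (v * d) y.1) (show g + 1 < v * d by omega) hfalse
          rw [Fin.lt_def]
          exact hasc
        refine ⟨diamond_of_forced hv hloc hforced, avoids231_of_loc hloc,
          avoids312_of_loc hloc, ?_⟩
        rw [desNum'_eq, sOf_ofBijective]
        exact y.2.2⟩
      left_inv := by
        intro x
        apply Subtype.ext
        apply Equiv.ext
        intro p
        have hl := loc_of_avoids x.2.2.1 x.2.2.2.1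
        have hcomp : ∀ g (hg : g + 1 < v * d),
            extend (v * d) (sOf (v * d) x.1) g = true ↔
              x.1 ⟨g + 1, hg⟩ < x.1 ⟨g, Nat.lt_of_succ_lt hg⟩ := by
          intro g hg
          have hglt : g < v * d - 1 := by omega
          have h1 : extend (v * d) (sOf (v * d) x.1) g = sOf (v * d) x.1 ⟨g, hglt⟩ :=
            dif_pos hglt
          rw [h1]
          simp only [sOf, decide_eq_true_eq]
        exact (loc_eq_ff hl (extend_last (v * d) (sOf (v * d) x.1)) hcomp p).symm
      right_inv := fun y => Subtype.ext (sOf_ofBijective (v * d) y.1) }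
  have E2 : {s : Fin (v * d - 1) → Bool //
        (∀ g : Fin (v * d - 1), FpP v g.1 → s g = false) ∧
        (Finset.univ.filter (fun g => s g = true)).card = k} ≃
      {T : Finset (Fin (v * d - 1)) // T ∈ Finset.powersetCard k Free} :=
    { toFun := fun s => ⟨Finset.univ.filter (fun g => s.1 g = true), by
        rw [Finset.mem_powersetCard]
        refine ⟨?_, s.2.2⟩
        intro g hg
        rw [Finset.mem_filter] at hg
        rw [hFree, Finset.mem_filter]
        refine ⟨Finset.mem_univ g, ?_⟩
        intro hFp
        rw [s.2.1 g hFp] at hg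
        exact Bool.noConfusion hg.2⟩
      invFun := fun T => ⟨fun g => decide (g ∈ T.1), by
        have hT := Finset.mem_powersetCard.mp T.2
        constructor
        · intro g hFp
          apply decide_eq_false
          intro hmem
          have hgF := hT.1 hmem
          rw [hFree, Finset.mem_filter] at hgF
          exact hgF.2 hFp
        · have hfe : Finset.univ.filter (fun g => decide (g ∈ T.1) = true) = T.1 := by
            ext g
            simp
          rw [hfe]
          exact hT.2⟩
      left_inv := fun s => Subtype.ext (by
        funext g
        cases h : s.1 g <;> simp [Finset.mem_filter, h])
      right_inv := fun T => Subtype.ext (by ext g; simp) }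
  have hfree : Free.card = d * (v - 2) - 1 := by
    have htot : (Finset.univ.filter (fun g : Fin (v * d - 1) => FpP v g.1)).card + Free.card
        = v * d - 1 := by
      rw [hFree]
      have h := Finset.card_filter_add_card_filter_not
        (s := (Finset.univ : Finset (Fin (v * d - 1)))) (p := fun g : Fin (v * d - 1) => FpP v g.1)
      simpa [Finset.card_univ] using h
    rw [forced_card v d hv hd] at htot
    have harith : d * (v - 2) + 2 * d = d * v := by
      have h2 : v - 2 + 2 = v := by omega
      calc d * (v - 2) + 2 * d = d * ((v - 2) + 2) := by ring
        _ = d * v := by rw [h2]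
    have hc : v * d = d * v := Nat.mul_comm _ _
    omega
  calc Nat.card {π : Equiv.Perm (Fin (v * d)) //
        IsDiamond' v d π ∧ Avoids231' π ∧ Avoids312' π ∧
        Nat.card {i : Fin (v * d) // ∃ h : i.1 + 1 < v * d, π ⟨i.1 + 1, h⟩ < π i} = k}
      = Nat.card {s : Fin (v * d - 1) → Bool //
          (∀ g : Fin (v * d - 1), FpP v g.1 → s g = false) ∧
          (Finset.univ.filter (fun g => s g = true)).card = k} := Nat.card_congr E1
    _ = Nat.card {T : Finset (Fin (v * d - 1)) // T ∈ Finset.powersetCard k Free} :=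
        Nat.card_congr E2
    _ = (Finset.powersetCard k Free).card := by
        rw [Nat.card_eq_fintype_card, Fintype.card_coe]
    _ = Free.card.choose k := Finset.card_powersetCard k Free
    _ = (d * (v - 2) - 1).choose k := by rw [hfree]
end DiamondAux

theorem avoids231_312_descents (v d : ℕ) (hv : 4 ≤ v) (hd : 1 ≤ d) :
    ∀ k : ℕ,
      Nat.card {π : Equiv.Perm (Fin (v * d)) //
          IsDiamond v d π ∧ Avoids231 π ∧ Avoids312 π ∧ desNum π = k} =
        (d * (v - 2) - 1).choose k := by
  intro k
  exact DiamondAux.main_count v d hv hd k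
end

section
/- Let π be a diamond permutation of type (v,d) avoiding both 231 and 321, and let k be the position of the largest entry vd. Then the entries of π in positions k+1, k+2, ..., vd form a sequence of consecutive integers in increasing order; moreover if the last entry π_{vd} is not vd, then π_{vd} = vd - 1. -/
theorem avoids231_321_after_max (v d : ℕ) (hv : 4 ≤ v) (hd : 1 ≤ d)
    (π : Equiv.Perm (Fin (v * d))) (hD : IsDiamond v d π)
    (hA : Avoids231 π) (hB : Avoids321 π)
    (k : Fin (v * d)) (hk : (π k).1 = v * d - 1) :
    (∀ p q : Fin (v * d), k < p → p ≤ q → (π q).1 = (π p).1 + (q.1 - p.1)) ∧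
      (∀ (h : v * d - 1 < v * d),
        (π ⟨v * d - 1, h⟩).1 ≠ v * d - 1 → (π ⟨v * d - 1, h⟩).1 = v * d - 2) := by
  have hn4 : 4 ≤ v * d := le_trans hv (Nat.le_mul_of_pos_right v hd)
  -- π k is the maximum
  have hmax : ∀ x : Fin (v * d), x ≠ k → π x < π k := by
    intro x hx
    have h1 : (π x).1 < v * d := (π x).2
    have h2 : π x ≠ π k := fun h => hx (π.injective h)
    have h3 : (π x).1 ≠ (π k).1 := fun h => h2 (Fin.ext h)
    exact Fin.lt_def.mpr (by omega)
  -- increasing after k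
  have hinc : ∀ p q : Fin (v * d), k < p → p < q → π p < π q := by
    intro p q hkp hpq
    by_contra hle
    push_neg at hle
    have hne : π q ≠ π p := fun h => (ne_of_lt hpq).symm (π.injective h)
    have hlt : π q < π p := lt_of_le_of_ne hle hne
    exact hB ⟨k, p, q, hkp, hpq, hlt, hmax p (ne_of_gt hkp)⟩
  -- adjacent step
  have hstep : ∀ p : Fin (v * d), k < p → ∀ h : p.1 + 1 < v * d,
      (π ⟨p.1 + 1, h⟩).1 = (π p).1 + 1 := by
    intro p hkp h
    set q : Fin (v * d) := ⟨p.1 + 1, h⟩ with hq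
    have hpq : p < q := Fin.lt_def.mpr (Nat.lt_succ_self _)
    have h1 : π p < π q := hinc p q hkp hpq
    by_contra hne
    have h2 : (π p).1 + 1 < (π q).1 := lt_of_le_of_ne h1 (Ne.symm hne)
    set c : Fin (v * d) := ⟨(π p).1 + 1, lt_trans h2 (π q).2⟩ with hc
    set r : Fin (v * d) := π.symm c with hr
    have hrc : π r = c := π.apply_symm_apply c
    have hcp : π p < π r := by rw [hrc]; exact Fin.lt_def.mpr (Nat.lt_succ_self _)
    have hcq : π r < π q := by rw [hrc]; exact Fin.lt_def.mpr h2
    have hrk : r ≠ k := by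
      intro hh
      have : π r < π k := lt_trans hcq (hmax q (ne_of_gt (lt_trans hkp hpq)))
      exact absurd (hh ▸ this) (lt_irrefl _)
    rcases lt_or_gt_of_ne hrk with hlt | hgt
    · exact hA ⟨r, k, p, hlt, hkp, hcp, hmax r hrk⟩
    · have hrp : p < r := by
        rcases lt_trichotomy r p with h' | h' | h'
        · exact absurd (hinc r p hgt h') (not_lt_of_gt hcp)
        · exact absurd (h' ▸ hcp) (lt_irrefl _)
        · exact h'
      have hrq : r < q := by
        rcases lt_trichotomy r q with h' | h' | h'
        · exact h'
        · exact absurd (h' ▸ hcq) (lt_irrefl _)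
        · exact absurd (hinc q r (lt_trans hkp hpq) h') (not_lt_of_gt hcq)
      have e1 : p.1 < r.1 := hrp
      have e2 : r.1 < p.1 + 1 := hrq
      omega
  constructor
  · intro p q hkp hpqle
    have key : ∀ m : ℕ, ∀ p q : Fin (v * d), k < p → q.1 = p.1 + m →
        (π q).1 = (π p).1 + m := by
      intro m
      induction m with
      | zero =>
        intro p q _ hq
        have : q = p := Fin.ext (by omega)
        rw [this]; omega
      | succ m ih =>
        intro p q hkp hq
        have hlt : p.1 + m < v * d := by have := q.2; omega
        set q' : Fin (v * d) := ⟨p.1 + m, hlt⟩ with hq'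
        have h1 : (π q').1 = (π p).1 + m := ih p q' hkp rfl
        have hkq' : k < q' := lt_of_lt_of_le hkp (Fin.le_def.mpr (Nat.le_add_right _ _))
        have hb : q'.1 + 1 < v * d := by have := q.2; simp [hq']; omega
        have h2 := hstep q' hkq' hb
        have hqe : q = ⟨q'.1 + 1, hb⟩ := Fin.ext (by simp [hq']; omega)
        rw [hqe, h2, h1]; omega
    have hq : q.1 = p.1 + (q.1 - p.1) := by
      have := Fin.le_def.mp hpqle; omega
    have := key (q.1 - p.1) p q hkp hq
    omega
  · intro h hne
    set L : Fin (v * d) := ⟨v * d - 1, h⟩ with hL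
    have hLk : k ≠ L := by
      intro hh; apply hne; rw [← hh]; exact hk
    have hkL : k < L := Fin.lt_def.mpr
      (lt_of_le_of_ne (by have := k.2; simp [hL]; omega) (fun hh => hLk (Fin.ext (by simpa [hL] using hh))))
    have hL2 : (π L).1 ≤ v * d - 2 := by
      have h1 : (π L).1 < v * d := (π L).2
      omega
    rcases eq_or_lt_of_le hL2 with he | hlt
    · exact he
    · exfalso
      set c : Fin (v * d) := ⟨v * d - 2, by omega⟩ with hc
      set r : Fin (v * d) := π.symm c with hr
      have hrc : π r = c := π.apply_symm_apply c
      have hrk : r ≠ k := by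
        intro hh
        have h1 : (π r).1 = v * d - 1 := by rw [hh]; exact hk
        rw [hrc] at h1
        simp [hc] at h1
        omega
      have hrL : r ≠ L := by
        intro hh
        have := hh ▸ hrc
        rw [this] at hlt
        exact absurd hlt (lt_irrefl _)
      have hLr : π L < π r := by rw [hrc]; exact Fin.lt_def.mpr hlt
      rcases lt_or_gt_of_ne hrk with h' | h'
      · exact hA ⟨r, k, L, h', hkL, hLr, hmax r hrk⟩
      · have hrltL : r < L := Fin.lt_def.mpr
          (lt_of_le_of_ne (by have := r.2; simp [hL]; omega) (fun hh => hrL (Fin.ext (by simpa [hL] using hh))))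
        exact absurd (hinc r L h' hrltL) (not_lt_of_gt hLr)
end

section
/- For v ≥ 4 and d ≥ 1, the number of diamond permutations of type (v,d) avoiding all of 132, 213, and 321 equals d. -/
namespace DiamondAux

lemma mod_cases (a n : ℕ) (h : a < 2 * n) : a % n = a ∨ a % n + n = a := by
  rcases Nat.lt_or_ge a n with h' | h'
  · exact Or.inl (Nat.mod_eq_of_lt h')
  · right
    have h2 : a % n = a - n := by
      rw [Nat.mod_eq_sub_mod h', Nat.mod_eq_of_lt (by omega)]
    omega

variable {n : ℕ}

noncomputable def rot [NeZero n] (c : Fin n) : Equiv.Perm (Fin n) := Equiv.addLeft c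

lemma rot_apply [NeZero n] (c i : Fin n) : ((rot c) i).val = (c.val + i.val) % n := by
  simp [rot, Fin.val_add]

lemma rot_avoids132 [NeZero n] (c : Fin n) : Avoids132 (rot c) := by
  rintro ⟨i, j, k, hij, hjk, h1, h2⟩
  rw [Fin.lt_def] at hij hjk h1 h2
  have hA : ((rot c) i).val < n := Fin.is_lt _
  have hB : ((rot c) j).val < n := Fin.is_lt _
  have hC : ((rot c) k).val < n := Fin.is_lt _
  have hc : c.val < n := c.is_lt
  have hi : i.val < n := i.is_lt
  have hj : j.val < n := j.is_lt
  have hk : k.val < n := k.is_lt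
  have mi := mod_cases (c.val + i.val) n (by omega)
  have mj := mod_cases (c.val + j.val) n (by omega)
  have mk := mod_cases (c.val + k.val) n (by omega)
  rw [← rot_apply c i] at mi
  rw [← rot_apply c j] at mj
  rw [← rot_apply c k] at mk
  omega

lemma rot_avoids213 [NeZero n] (c : Fin n) : Avoids213 (rot c) := by
  rintro ⟨i, j, k, hij, hjk, h1, h2⟩
  rw [Fin.lt_def] at hij hjk h1 h2
  have hA : ((rot c) i).val < n := Fin.is_lt _
  have hB : ((rot c) j).val < n := Fin.is_lt _
  have hC : ((rot c) k).val < n := Fin.is_lt _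
  have hc : c.val < n := c.is_lt
  have hi : i.val < n := i.is_lt
  have hj : j.val < n := j.is_lt
  have hk : k.val < n := k.is_lt
  have mi := mod_cases (c.val + i.val) n (by omega)
  have mj := mod_cases (c.val + j.val) n (by omega)
  have mk := mod_cases (c.val + k.val) n (by omega)
  rw [← rot_apply c i] at mi
  rw [← rot_apply c j] at mj
  rw [← rot_apply c k] at mk
  omega

lemma rot_avoids321 [NeZero n] (c : Fin n) : Avoids321 (rot c) := by
  rintro ⟨i, j, k, hij, hjk, h1, h2⟩
  rw [Fin.lt_def] at hij hjk h1 h2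
  have hA : ((rot c) i).val < n := Fin.is_lt _
  have hB : ((rot c) j).val < n := Fin.is_lt _
  have hC : ((rot c) k).val < n := Fin.is_lt _
  have hc : c.val < n := c.is_lt
  have hi : i.val < n := i.is_lt
  have hj : j.val < n := j.is_lt
  have hk : k.val < n := k.is_lt
  have mi := mod_cases (c.val + i.val) n (by omega)
  have mj := mod_cases (c.val + j.val) n (by omega)
  have mk := mod_cases (c.val + k.val) n (by omega)
  rw [← rot_apply c i] at mi
  rw [← rot_apply c j] at mj
  rw [← rot_apply c k] at mk
  omega

lemma key_mod (v d a j : ℕ) (hv : 0 < v) (hd : 0 < d) (hj : j < v) :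
    (a * v + j) % (v * d) = a % d * v + j := by
  have h2 : a % d < d := Nat.mod_lt a hd
  have h1 : a % d * v + j < v * d := by
    calc a % d * v + j < a % d * v + v := by omega
    _ = (a % d + 1) * v := by ring
    _ ≤ d * v := Nat.mul_le_mul_right v (by omega)
    _ = v * d := Nat.mul_comm d v
  have h0 : a * v + j = (a % d * v + j) + (a / d) * (v * d) := by
    conv_lhs => rw [← Nat.div_add_mod a d]
    ring
  rw [h0, Nat.add_mul_mod_self_right, Nat.mod_eq_of_lt h1]

lemma rot_isDiamond (v d m : ℕ) (hv : 0 < v) (hd : 0 < d) (hm : m < d)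
    [NeZero (v * d)] (hmv : m * v < v * d) :
    IsDiamond v d (rot (⟨m * v, hmv⟩ : Fin (v * d))) := by
  intro i hi j hj h0 hjlt hl
  have e0 : ((rot (⟨m * v, hmv⟩ : Fin (v * d))) ⟨i * v, h0⟩).val = (m + i) % d * v + 0 := by
    rw [rot_apply]
    show (m * v + i * v) % (v * d) = _
    rw [show m * v + i * v = (m + i) * v + 0 by ring]
    exact key_mod v d (m + i) 0 hv hd hv
  have e1 : ((rot (⟨m * v, hmv⟩ : Fin (v * d))) ⟨i * v + j, hjlt⟩).val = (m + i) % d * v + j := by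
    rw [rot_apply]
    show (m * v + (i * v + j)) % (v * d) = _
    rw [show m * v + (i * v + j) = (m + i) * v + j by ring]
    exact key_mod v d (m + i) j hv hd hj
  have e2 : ((rot (⟨m * v, hmv⟩ : Fin (v * d))) ⟨i * v + (v - 1), hl⟩).val
      = (m + i) % d * v + (v - 1) := by
    rw [rot_apply]
    show (m * v + (i * v + (v - 1))) % (v * d) = _
    rw [show m * v + (i * v + (v - 1)) = (m + i) * v + (v - 1) by ring]
    exact key_mod v d (m + i) (v - 1) hv hd (by omega)
  constructor <;> rw [Fin.le_def] <;> omega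

lemma rot_diamond_dvd (v d : ℕ) (hv : 0 < v) (hd : 0 < d) [NeZero (v * d)]
    (c : Fin (v * d)) (h : IsDiamond v d (rot c)) : v ∣ c.val := by
  by_cases hc : c.val = 0
  · simp [hc]
  have hnpos : 0 < v * d := Nat.mul_pos hv hd
  have hcn : c.val < v * d := c.is_lt
  set p0 := v * d - c.val with hp0
  have hp0pos : 0 < p0 := by omega
  have hp0lt : p0 < v * d := by omega
  have hq : p0 / v < d := by
    rw [Nat.div_lt_iff_lt_mul hv]
    calc p0 < v * d := hp0lt
    _ = d * v := Nat.mul_comm v d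
  set q := p0 / v with hqdef
  set j0 := p0 % v with hj0def
  have hqv : q * v + j0 = p0 := by
    rw [hqdef, hj0def, Nat.mul_comm]
    exact Nat.div_add_mod p0 v
  have hqvlt : (q + 1) * v ≤ d * v := Nat.mul_le_mul_right v (by omega)
  have hexp : (q + 1) * v = q * v + v := by ring
  have hdv : d * v = v * d := Nat.mul_comm d v
  have h0 : q * v < v * d := by omega
  have hjlt : q * v + j0 < v * d := by omega
  have hl : q * v + (v - 1) < v * d := by omega
  obtain ⟨hle, _⟩ := h q hq j0 (Nat.mod_lt p0 hv) h0 hjlt hl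
  have vp0 : ((rot c) ⟨q * v + j0, hjlt⟩).val = 0 := by
    rw [rot_apply]
    have : c.val + (q * v + j0) = v * d := by omega
    rw [this, Nat.mod_self]
  rw [Fin.le_def, vp0, Nat.le_zero] at hle
  rw [rot_apply] at hle
  have d1 : (v * d) ∣ (c.val + q * v) := Nat.dvd_of_mod_eq_zero hle
  have d2 : (v * d) ∣ (c.val + (q * v + j0)) := by
    have : c.val + (q * v + j0) = v * d := by omega
    rw [this]
  have d3 : (v * d) ∣ j0 := by
    have h5 := Nat.dvd_sub d2 d1
    rwa [show c.val + (q * v + j0) - (c.val + q * v) = j0 by omega] at h5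
  have hvn : v ≤ v * d := Nat.le_mul_of_pos_right v hd
  have hj0v : j0 < v := Nat.mod_lt p0 hv
  have j00 : j0 = 0 := by
    rcases Nat.eq_zero_or_pos j0 with h' | h'
    · exact h'
    · exact absurd (Nat.le_of_dvd h' d3) (by omega)
  have dvp0 : v ∣ p0 := ⟨q, by rw [Nat.mul_comm]; omega⟩
  have dvn : v ∣ v * d := ⟨d, rfl⟩
  have := Nat.dvd_sub dvn dvp0
  have heq : v * d - p0 = c.val := by omega
  rwa [heq] at this

lemma step (π : Equiv.Perm (Fin n)) (h132 : Avoids132 π) (h213 : Avoids213 π)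
    (h321 : Avoids321 π) (k : ℕ) (h : k + 1 < n) :
    (π ⟨k + 1, h⟩).val = ((π ⟨k, by omega⟩).val + 1) % n := by
  have hk : k < n := by omega
  have H132 : ∀ i j l : Fin n, i.val < j.val → j.val < l.val →
      (π i).val < (π l).val → (π l).val < (π j).val → False :=
    fun i j l a b c' d => h132 ⟨i, j, l, Fin.lt_def.mpr a, Fin.lt_def.mpr b,
      Fin.lt_def.mpr c', Fin.lt_def.mpr d⟩
  have H213 : ∀ i j l : Fin n, i.val < j.val → j.val < l.val →
      (π j).val < (π i).val → (π i).val < (π l).val → False :=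
    fun i j l a b c' d => h213 ⟨i, j, l, Fin.lt_def.mpr a, Fin.lt_def.mpr b,
      Fin.lt_def.mpr c', Fin.lt_def.mpr d⟩
  have H321 : ∀ i j l : Fin n, i.val < j.val → j.val < l.val →
      (π l).val < (π j).val → (π j).val < (π i).val → False :=
    fun i j l a b c' d => h321 ⟨i, j, l, Fin.lt_def.mpr a, Fin.lt_def.mpr b,
      Fin.lt_def.mpr c', Fin.lt_def.mpr d⟩
  suffices hkey : ∀ x y : Fin n, x.val = k → y.val = k + 1 →
      (π y).val = ((π x).val + 1) % n from hkey ⟨k, hk⟩ ⟨k + 1, h⟩ rfl rfl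
  intro x y hx hy
  have hxy : x ≠ y := by intro he; rw [he] at hx; omega
  have hab : (π x).val ≠ (π y).val := fun he => hxy (π.injective (Fin.ext he))
  have han : (π x).val < n := Fin.is_lt _
  have hbn : (π y).val < n := Fin.is_lt _
  rcases Nat.lt_or_ge (π x).val (π y).val with hlt | hge
  · -- ascent: show (π y).val = (π x).val + 1
    have hb1 : (π y).val = (π x).val + 1 := by
      by_contra hne
      have hne' : (π x).val + 1 < (π y).val := by omega
      set p := π.symm ⟨(π x).val + 1, by omega⟩ with hp
      have hwval : (π p).val = (π x).val + 1 := by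
        rw [hp, π.apply_symm_apply]
      have hpx : p.val ≠ x.val := by
        intro he
        rw [show p = x from Fin.ext he] at hwval
        omega
      have hpy : p.val ≠ y.val := by
        intro he
        rw [show p = y from Fin.ext he] at hwval
        omega
      rcases Nat.lt_trichotomy p.val x.val with hc | hc | hc
      · exact H213 p x y hc (by omega) (by omega) (by omega)
      · exact hpx hc
      · exact H132 x y p (by omega) (by omega) (by omega) (by omega)
    rw [hb1, Nat.mod_eq_of_lt (by omega)]
  · -- descent
    have hlt : (π y).val < (π x).val := by omega
    have ha1 : (π x).val = n - 1 := by
      by_contra hne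
      have hne' : (π x).val + 1 < n := by omega
      set p := π.symm ⟨(π x).val + 1, hne'⟩ with hp
      have hwval : (π p).val = (π x).val + 1 := by
        rw [hp, π.apply_symm_apply]
      have hpx : p.val ≠ x.val := by
        intro he
        rw [show p = x from Fin.ext he] at hwval
        omega
      have hpy : p.val ≠ y.val := by
        intro he
        rw [show p = y from Fin.ext he] at hwval
        omega
      rcases Nat.lt_trichotomy p.val x.val with hc | hc | hc
      · exact H321 p x y hc (by omega) (by omega) (by omega)
      · exact hpx hc
      · exact H213 x y p (by omega) (by omega) (by omega) (by omega)
    have hb0 : (π y).val = 0 := by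
      by_contra hne
      have hne' : 0 < (π y).val := by omega
      set p := π.symm ⟨(π y).val - 1, by omega⟩ with hp
      have hwval : (π p).val = (π y).val - 1 := by
        rw [hp, π.apply_symm_apply]
      have hpx : p.val ≠ x.val := by
        intro he
        rw [show p = x from Fin.ext he] at hwval
        omega
      have hpy : p.val ≠ y.val := by
        intro he
        rw [show p = y from Fin.ext he] at hwval
        omega
      rcases Nat.lt_trichotomy p.val x.val with hc | hc | hc
      · exact H132 p x y hc (by omega) (by omega) (by omega)
      · exact hpx hc
      · exact H321 x y p (by omega) (by omega) (by omega) (by omega)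
    rw [ha1, hb0, show n - 1 + 1 = n by omega, Nat.mod_self]

lemma vals (π : Equiv.Perm (Fin n)) (h132 : Avoids132 π) (h213 : Avoids213 π)
    (h321 : Avoids321 π) (h0 : 0 < n) :
    ∀ k, ∀ (hk : k < n), (π ⟨k, hk⟩).val = ((π ⟨0, h0⟩).val + k) % n := by
  intro k
  induction k with
  | zero =>
    intro hk
    rw [Nat.add_zero, Nat.mod_eq_of_lt (Fin.is_lt _)]
  | succ k ih =>
    intro hk
    rw [step π h132 h213 h321 k hk, ih (by omega), Nat.mod_add_mod, Nat.add_assoc]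

end DiamondAux


open DiamondAux in
theorem avoids132_213_321_count (v d : ℕ) (hv : 4 ≤ v) (hd : 1 ≤ d) :
    Nat.card {π : Equiv.Perm (Fin (v * d)) //
        IsDiamond v d π ∧ Avoids132 π ∧ Avoids213 π ∧ Avoids321 π} = d := by
  have hv0 : 0 < v := by omega
  have hd0 : 0 < d := by omega
  have hn : 0 < v * d := Nat.mul_pos hv0 hd0
  haveI : NeZero (v * d) := ⟨hn.ne'⟩
  have hmul : ∀ m : ℕ, m < d → m * v < v * d := by
    intro m hm
    have h1 : (m + 1) * v ≤ d * v := Nat.mul_le_mul_right v hm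
    have h2 : (m + 1) * v = m * v + v := by ring
    have h3 : d * v = v * d := Nat.mul_comm d v
    omega
  let F : Fin d → {π : Equiv.Perm (Fin (v * d)) //
      IsDiamond v d π ∧ Avoids132 π ∧ Avoids213 π ∧ Avoids321 π} :=
    fun m => ⟨rot ⟨m.val * v, hmul m.val m.isLt⟩,
      rot_isDiamond v d m.val hv0 hd0 m.isLt (hmul m.val m.isLt),
      rot_avoids132 _, rot_avoids213 _, rot_avoids321 _⟩
  have hbij : Function.Bijective F := by
    constructor
    · intro m1 m2 he
      have h1 : (F m1).val 0 = (F m2).val 0 := by rw [he]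
      have h2 : (⟨m1.val * v, hmul m1.val m1.isLt⟩ : Fin (v * d))
          = ⟨m2.val * v, hmul m2.val m2.isLt⟩ := by
        simpa [F, rot] using h1
      have h3 : m1.val * v = m2.val * v := congrArg Fin.val h2
      exact Fin.ext (Nat.eq_of_mul_eq_mul_right hv0 h3)
    · rintro ⟨π, hdia, h132, h213, h321⟩
      set c := π ⟨0, hn⟩ with hc
      have hval := vals π h132 h213 h321 hn
      have hrot : π = rot c := by
        apply Equiv.ext
        intro i
        apply Fin.ext
        rw [rot_apply]
        have h := hval i.val i.isLt
        rwa [Fin.eta] at h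
      have hdvd : v ∣ c.val := rot_diamond_dvd v d hv0 hd0 c (hrot ▸ hdia)
      obtain ⟨m, hmeq⟩ := hdvd
      have hmd : m < d := by
        have : c.val < v * d := c.is_lt
        rw [hmeq] at this
        exact Nat.lt_of_mul_lt_mul_left this
      refine ⟨⟨m, hmd⟩, ?_⟩
      apply Subtype.ext
      show rot ⟨m * v, hmul m hmd⟩ = π
      rw [hrot]
      congr 1
      exact Fin.ext (by rw [hmeq]; exact (Nat.mul_comm m v))
  rw [← Nat.card_eq_of_bijective F hbij, Nat.card_eq_fintype_card, Fintype.card_fin]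
end

section
/- Let S be any set of at least 4 distinct patterns of length 3, and let v ≥ 4 and d ≥ 1. If 123 ∈ S, then no diamond permutation of type (v,d) avoids all patterns in S; if 123 ∉ S, then exactly one diamond permutation of type (v,d) avoids all patterns in S (namely the identity permutation). -/
lemma contains_of_triple {n : ℕ} (π : Equiv.Perm (Fin n)) (ρ : Equiv.Perm (Fin 3))
    {i j k : Fin n} (hij : i < j) (hjk : j < k)
    (h01 : π i < π j ↔ ρ 0 < ρ 1) (h02 : π i < π k ↔ ρ 0 < ρ 2)
    (h12 : π j < π k ↔ ρ 1 < ρ 2) : ContainsPat ρ π := by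
  have nij : (π i).val ≠ (π j).val := fun h => π.injective.ne hij.ne (Fin.ext h)
  have nik : (π i).val ≠ (π k).val := fun h => π.injective.ne (hij.trans hjk).ne (Fin.ext h)
  have njk : (π j).val ≠ (π k).val := fun h => π.injective.ne hjk.ne (Fin.ext h)
  have r01 : (ρ 0).val ≠ (ρ 1).val :=
    fun h => ρ.injective.ne (show (0:Fin 3) ≠ 1 by decide) (Fin.ext h)
  have r02 : (ρ 0).val ≠ (ρ 2).val :=
    fun h => ρ.injective.ne (show (0:Fin 3) ≠ 2 by decide) (Fin.ext h)
  have r12 : (ρ 1).val ≠ (ρ 2).val :=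
    fun h => ρ.injective.ne (show (1:Fin 3) ≠ 2 by decide) (Fin.ext h)
  simp only [Fin.lt_def] at h01 h02 h12 hij hjk
  have e0 : (⟨0, by omega⟩ : Fin 3) = 0 := rfl
  have e1 : (⟨1, by omega⟩ : Fin 3) = 1 := rfl
  have e2 : (⟨2, by omega⟩ : Fin 3) = 2 := rfl
  refine ⟨![i, j, k], ?_, ?_⟩
  · intro a b hab
    fin_cases a <;> fin_cases b <;>
      simp only [e0, e1, e2, Matrix.cons_val_zero, Matrix.cons_val_one, Matrix.head_cons,
        Matrix.cons_val_two, Matrix.tail_cons, Fin.lt_def] at hab ⊢ <;> omega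
  · intro a b
    fin_cases a <;> fin_cases b <;>
      simp only [e0, e1, e2, Matrix.cons_val_zero, Matrix.cons_val_one, Matrix.head_cons,
        Matrix.cons_val_two, Matrix.tail_cons, Fin.lt_def] <;> omega


def c132 : Equiv.Perm (Fin 3) := Equiv.swap 1 2
def c213 : Equiv.Perm (Fin 3) := Equiv.swap 0 1
def c231 : Equiv.Perm (Fin 3) := finRotate 3
def c312 : Equiv.Perm (Fin 3) := (finRotate 3)⁻¹

lemma contains123 {n : ℕ} (π : Equiv.Perm (Fin n)) {i j k : Fin n} (hij : i < j) (hjk : j < k)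
    (h1 : π i < π j) (h2 : π j < π k) : ContainsPat (1 : Equiv.Perm (Fin 3)) π :=
  contains_of_triple π 1 hij hjk (iff_of_true h1 (by decide))
    (iff_of_true (h1.trans h2) (by decide)) (iff_of_true h2 (by decide))

lemma contains132 {n : ℕ} (π : Equiv.Perm (Fin n)) {i j k : Fin n} (hij : i < j) (hjk : j < k)
    (h1 : π i < π k) (h2 : π k < π j) : ContainsPat c132 π :=
  contains_of_triple π c132 hij hjk (iff_of_true (h1.trans h2) (by decide))
    (iff_of_true h1 (by decide)) (iff_of_false (asymm h2) (by decide))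

lemma contains213 {n : ℕ} (π : Equiv.Perm (Fin n)) {i j k : Fin n} (hij : i < j) (hjk : j < k)
    (h1 : π j < π i) (h2 : π i < π k) : ContainsPat c213 π :=
  contains_of_triple π c213 hij hjk (iff_of_false (asymm h1) (by decide))
    (iff_of_true h2 (by decide)) (iff_of_true (h1.trans h2) (by decide))

lemma contains231 {n : ℕ} (π : Equiv.Perm (Fin n)) {i j k : Fin n} (hij : i < j) (hjk : j < k)
    (h1 : π k < π i) (h2 : π i < π j) : ContainsPat c231 π :=
  contains_of_triple π c231 hij hjk (iff_of_true h2 (by decide))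
    (iff_of_false (asymm h1) (by decide)) (iff_of_false (asymm (h1.trans h2)) (by decide))

lemma contains312 {n : ℕ} (π : Equiv.Perm (Fin n)) {i j k : Fin n} (hij : i < j) (hjk : j < k)
    (h1 : π j < π k) (h2 : π k < π i) : ContainsPat c312 π :=
  contains_of_triple π c312 hij hjk (iff_of_false (asymm (h1.trans h2)) (by decide))
    (iff_of_false (asymm h2) (by decide)) (iff_of_true h1 (by decide))

lemma diamond_descent {v d : ℕ} (hv : 4 ≤ v) {π : Equiv.Perm (Fin (v * d))}
    (hπ : IsDiamond v d π) {a b : Fin (v * d)} (hab : a < b) (hdes : π b < π a) :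
    ∃ p q : Equiv.Perm (Fin 3), p ≠ 1 ∧ q ≠ 1 ∧ p ≠ q ∧
      ContainsPat p π ∧ ContainsPat q π := by
  have hv0 : 0 < v := by omega
  have hcomm : v * d = d * v := Nat.mul_comm v d
  set ia := a.val / v with hia_def
  set ib := b.val / v with hib_def
  have hda : ia * v + a.val % v = a.val := Nat.div_add_mod' a.val v
  have hdb : ib * v + b.val % v = b.val := Nat.div_add_mod' b.val v
  have hma : a.val % v < v := Nat.mod_lt _ hv0
  have hmb : b.val % v < v := Nat.mod_lt _ hv0
  have han : a.val < v * d := a.isLt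
  have hbn : b.val < v * d := b.isLt
  have habv : a.val < b.val := hab
  have key : ∀ i : ℕ, i < d → i * v + v ≤ v * d := by
    intro i hi
    have h1 : (i + 1) * v ≤ d * v := Nat.mul_le_mul_right v hi
    have e1 : (i + 1) * v = i * v + v := by ring
    omega
  have hiad : ia < d := by
    rw [hia_def, Nat.div_lt_iff_lt_mul hv0]; omega
  have hibd : ib < d := by
    rw [hib_def, Nat.div_lt_iff_lt_mul hv0]; omega
  have hkA := key ia hiad
  have hkB := key ib hibd
  -- bounds
  have hF : ia * v < v * d := by omega
  have hX : ia * v + (v - 1) < v * d := by omega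
  have hM : ia * v + 1 < v * d := by omega
  have hY : ib * v < v * d := by omega
  have hT : ib * v + (v - 1) < v * d := by omega
  have hja : ia * v + a.val % v < v * d := by omega
  have hjb : ib * v + b.val % v < v * d := by omega
  -- diamond facts
  have ea : (⟨ia * v + a.val % v, hja⟩ : Fin (v * d)) = a := Fin.ext hda
  have eb : (⟨ib * v + b.val % v, hjb⟩ : Fin (v * d)) = b := Fin.ext hdb
  obtain ⟨hFa, haX⟩ := hπ ia hiad (a.val % v) hma hF hja hX
  obtain ⟨hYb, hbT⟩ := hπ ib hibd (b.val % v) hmb hY hjb hT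
  rw [ea] at hFa haX
  rw [eb] at hYb hbT
  have hiaib : ia ≤ ib := Nat.div_le_div_right habv.le
  rcases eq_or_lt_of_le hiaib with heq | hlt
  · -- same block
    have hF' : (⟨ia * v, hF⟩ : Fin (v * d)) = ⟨ib * v, hY⟩ :=
      Fin.ext (by simp only [Fin.val_mk]; rw [heq])
    have hX' : (⟨ia * v + (v - 1), hX⟩ : Fin (v * d)) = ⟨ib * v + (v - 1), hT⟩ :=
      Fin.ext (by simp only [Fin.val_mk]; rw [heq])
    rw [hF'] at hFa
    rw [hX'] at haX
    set F : Fin (v * d) := ⟨ib * v, hY⟩ with hFdef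
    set L : Fin (v * d) := ⟨ib * v + (v - 1), hT⟩ with hLdef
    have heqv : ia * v = ib * v := by rw [heq]
    have hFlea : F ≤ a := by
      rw [Fin.le_def]; simp only [hFdef, Fin.val_mk]; omega
    have hbleL : b ≤ L := by
      rw [Fin.le_def]; simp only [hLdef, Fin.val_mk]; omega
    have hFlta : F < a := lt_of_le_of_ne hFlea
      (fun h => absurd (h ▸ hYb) (not_le.mpr hdes))
    have hbltL : b < L := lt_of_le_of_ne hbleL
      (fun h => absurd (h ▸ haX) (not_le.mpr hdes))
    have hFltb : F < b := hFlta.trans hab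
    have haltL : a < L := hab.trans hbltL
    have hπFb : π F < π b := lt_of_le_of_ne hYb (fun h => hFltb.ne (π.injective h))
    have hπaL : π a < π L := lt_of_le_of_ne haX (fun h => haltL.ne (π.injective h))
    exact ⟨c132, c213, by decide, by decide, by decide,
      contains132 π hFlta hab hπFb hdes, contains213 π hab hbltL hdes hπaL⟩
  · -- different blocks
    set F : Fin (v * d) := ⟨ia * v, hF⟩ with hFdef
    set M : Fin (v * d) := ⟨ia * v + 1, hM⟩ with hMdef
    set X : Fin (v * d) := ⟨ia * v + (v - 1), hX⟩ with hXdef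
    set Y : Fin (v * d) := ⟨ib * v, hY⟩ with hYdef
    set T : Fin (v * d) := ⟨ib * v + (v - 1), hT⟩ with hTdef
    obtain ⟨hFM, hMX⟩ := hπ ia hiad 1 (by omega) hF hM hX
    have hsep : ia * v + v ≤ ib * v := by
      have h1 : (ia + 1) * v ≤ ib * v := Nat.mul_le_mul_right v hlt
      have e1 : (ia + 1) * v = ia * v + v := by ring
      omega
    have hMltX : M < X := by rw [Fin.lt_def]; simp only [hMdef, hXdef, Fin.val_mk]; omega
    have hXltY : X < Y := by rw [Fin.lt_def]; simp only [hXdef, hYdef, Fin.val_mk]; omega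
    have hYltT : Y < T := by rw [Fin.lt_def]; simp only [hYdef, hTdef, Fin.val_mk]; omega
    have hMltY : M < Y := hMltX.trans hXltY
    have hXltT : X < T := hXltY.trans hYltT
    have hπYX : π Y < π X := lt_of_le_of_lt hYb (lt_of_lt_of_le hdes haX)
    have hπMX : π M < π X := lt_of_le_of_ne hMX (fun h => hMltX.ne (π.injective h))
    have hπYT : π Y < π T := by
      refine lt_of_le_of_ne (hYb.trans hbT) (fun h => hYltT.ne (π.injective h))
    have hMY : π M ≠ π Y := fun h => hMltY.ne (π.injective h)
    have hXT : π X ≠ π T := fun h => hXltT.ne (π.injective h)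
    rcases hMY.lt_or_gt with hmy | hmy
    · rcases hXT.lt_or_gt with hxt | hxt
      · exact ⟨c132, c213, by decide, by decide, by decide,
          contains132 π hMltX hXltY hmy hπYX, contains213 π hXltY hYltT hπYX hxt⟩
      · exact ⟨c132, c312, by decide, by decide, by decide,
          contains132 π hMltX hXltY hmy hπYX, contains312 π hXltY hYltT hπYT hxt⟩
    · rcases hXT.lt_or_gt with hxt | hxt
      · exact ⟨c231, c213, by decide, by decide, by decide,
          contains231 π hMltX hXltY hmy hπMX, contains213 π hXltY hYltT hπYX hxt⟩
      · exact ⟨c231, c312, by decide, by decide, by decide,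
          contains231 π hMltX hXltY hmy hπMX, contains312 π hXltY hYltT hπYT hxt⟩


lemma perm_eq_one_of_strictMono {n : ℕ} {π : Equiv.Perm (Fin n)}
    (h : StrictMono (π : Fin n → Fin n)) : π = 1 := by
  have e : StrictMono.orderIsoOfSurjective (π : Fin n → Fin n) h π.surjective
      = OrderIso.refl (Fin n) := Subsingleton.elim _ _
  apply Equiv.ext
  intro i
  have := congrArg (fun f : Fin n ≃o Fin n => f i) e
  simpa [StrictMono.coe_orderIsoOfSurjective] using this

lemma strictMono_of_perm_iff : ∀ p : Equiv.Perm (Fin 3),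
    (∀ a b : Fin 3, a < b ↔ p a < p b) → p = 1 := by decide

lemma one_isDiamond (v d : ℕ) : IsDiamond v d (1 : Equiv.Perm (Fin (v * d))) := by
  intro i hi j hj h0 hjlt hl
  constructor <;> simp [Equiv.Perm.one_apply, Fin.mk_le_mk] <;> omega

lemma one_avoids {n : ℕ} {p : Equiv.Perm (Fin 3)} (hp : p ≠ 1) :
    AvoidsPat p (1 : Equiv.Perm (Fin n)) := by
  rintro ⟨f, hf, hiff⟩
  exact hp (strictMono_of_perm_iff p (fun a b => by
    simpa [hf.lt_iff_lt] using (hiff a b)))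

theorem avoids_four_patterns (S : Finset (Equiv.Perm (Fin 3))) (hS : 4 ≤ S.card)
    (v d : ℕ) (hv : 4 ≤ v) (hd : 1 ≤ d) :
    ((1 : Equiv.Perm (Fin 3)) ∈ S →
        Nat.card {π : Equiv.Perm (Fin (v * d)) //
          IsDiamond v d π ∧ ∀ p ∈ S, AvoidsPat p π} = 0) ∧
      ((1 : Equiv.Perm (Fin 3)) ∉ S →
        Nat.card {π : Equiv.Perm (Fin (v * d)) //
          IsDiamond v d π ∧ ∀ p ∈ S, AvoidsPat p π} = 1) := by
  constructor
  · intro h1S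
    have hempty : IsEmpty {π : Equiv.Perm (Fin (v * d)) //
        IsDiamond v d π ∧ ∀ p ∈ S, AvoidsPat p π} := by
      refine ⟨fun x => ?_⟩
      obtain ⟨π, hdia, hav⟩ := x
      have hvd : v ≤ v * d := Nat.le_mul_of_pos_right v hd
      have h0 : (0 : ℕ) * v < v * d := by omega
      have hj : 0 * v + 1 < v * d := by omega
      have hl : 0 * v + (v - 1) < v * d := by omega
      obtain ⟨h01, h1l⟩ := hdia 0 hd 1 (by omega) h0 hj hl
      have l01 : (⟨0 * v, h0⟩ : Fin (v * d)) < ⟨0 * v + 1, hj⟩ := by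
        rw [Fin.lt_def]; simp only [Fin.val_mk]; omega
      have l1l : (⟨0 * v + 1, hj⟩ : Fin (v * d)) < ⟨0 * v + (v - 1), hl⟩ := by
        rw [Fin.lt_def]; simp only [Fin.val_mk]; omega
      have s01 : π ⟨0 * v, h0⟩ < π ⟨0 * v + 1, hj⟩ :=
        lt_of_le_of_ne h01 (fun h => l01.ne (π.injective h))
      have s1l : π ⟨0 * v + 1, hj⟩ < π ⟨0 * v + (v - 1), hl⟩ :=
        lt_of_le_of_ne h1l (fun h => l1l.ne (π.injective h))
      exact hav 1 h1S (contains123 π l01 l1l s01 s1l)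
    simp only [Nat.card_of_isEmpty]
  · intro h1S
    rw [Nat.card_eq_one_iff_unique]
    have huniq : ∀ π : Equiv.Perm (Fin (v * d)),
        IsDiamond v d π → (∀ p ∈ S, AvoidsPat p π) → π = 1 := by
      intro π hdia hav
      apply perm_eq_one_of_strictMono
      intro x y hxy
      rcases lt_trichotomy (π x) (π y) with h | h | h
      · exact h
      · exact absurd (π.injective h) hxy.ne
      · exfalso
        obtain ⟨p, q, hp1, hq1, hpq, hcp, hcq⟩ := diamond_descent hv hdia hxy h
        have hpS : p ∉ S := fun hm => hav p hm hcp
        have hqS : q ∉ S := fun hm => hav q hm hcq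
        have hsub : ({1, p, q} : Finset (Equiv.Perm (Fin 3))) ⊆ Sᶜ := by
          intro x hx
          simp only [Finset.mem_insert, Finset.mem_singleton] at hx
          rw [Finset.mem_compl]
          rcases hx with rfl | rfl | rfl <;> assumption
        have hcard : ({1, p, q} : Finset (Equiv.Perm (Fin 3))).card = 3 := by
          rw [Finset.card_insert_of_notMem (by simp [Ne.symm hp1, Ne.symm hq1]),
            Finset.card_insert_of_notMem (by simp [hpq]), Finset.card_singleton]
        have hle := Finset.card_le_card hsub
        rw [Finset.card_compl, hcard] at hle
        have h6 : Fintype.card (Equiv.Perm (Fin 3)) = 6 := by decide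
        omega
    refine ⟨⟨fun x y => ?_⟩, ⟨⟨1, one_isDiamond v d,
      fun p hp => one_avoids (fun hh => h1S (hh ▸ hp))⟩⟩⟩
    obtain ⟨π, hdπ, havπ⟩ := x
    obtain ⟨π', hdπ', havπ'⟩ := y
    apply Subtype.ext
    simp only
    rw [huniq π hdπ havπ, huniq π' hdπ' havπ']
end
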